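/- Suppose S is join closed and let k be the number of indices i ∈ {1,…,n} with Ψ'_{S,f_i}(x_i) = 0. If k > 0, then n − k ≤ rank [S]_{f_1,…,f_n} ≤ n − 1. -/

import Mathlib

open Finset Matrix
open scoped Classical

/-- Rank is subadditive for matrices over ℂ. -/
lemma matrix_rank_add_le' {m n : Type*} [Fintype m] [Fintype n]
    (A B : Matrix m n ℂ) : (A + B).rank ≤ A.rank + B.rank := by
  have h : LinearMap.range (A + B).mulVecLin ≤
      LinearMap.range A.mulVecLin ⊔ LinearMap.range B.mulVecLin := by
    rintro _ ⟨v, rfl⟩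
    rw [Matrix.mulVecLin_add]
    exact Submodule.add_mem_sup ⟨v, rfl⟩ ⟨v, rfl⟩
  exact le_trans (Submodule.finrank_mono h)
    (Submodule.finrank_add_le_finrank_add_finrank _ _)

/-- Let `S` be join closed and `k` the number of indices `i` with
`Ψ'_{S,f i}(x i) = 0`. If `k > 0`, then
`n - k ≤ rank [S]_{f₁,…,fₙ} ≤ n - 1`. -/
theorem row_adjusted_join_matrix_rank_bounds
    {P : Type*} [Lattice P] {n : ℕ}
    (x : Fin n → P) (f : Fin n → P → ℂ) (μ : Fin n → Fin n → ℂ)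
    (hxinj : Function.Injective x)
    (hxord : ∀ i j : Fin n, x i ≤ x j → i ≤ j)
    (hjoin : ∀ i j : Fin n, ∃ k : Fin n, x k = x i ⊔ x j)
    (hμ0 : ∀ i j : Fin n, ¬ x i ≤ x j → μ i j = 0)
    (hμ : ∀ i j : Fin n, x i ≤ x j →
      (∑ v ∈ univ.filter (fun v => x i ≤ x v ∧ x v ≤ x j), μ i v) =
        if i = j then 1 else 0)
    (k : ℕ)
    (hk : k = (univ.filter (fun i : Fin n =>
      (∑ v ∈ univ.filter (fun v => x i ≤ x v), f i (x v) * μ i v) = 0)).card)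
    (hkpos : 0 < k) :
    n - k ≤ (Matrix.of fun i j : Fin n => f i (x i ⊔ x j)).rank ∧
      (Matrix.of fun i j : Fin n => f i (x i ⊔ x j)).rank ≤ n - 1 := by
  classical
  set A : Matrix (Fin n) (Fin n) ℂ := Matrix.of fun i j : Fin n => f i (x i ⊔ x j) with hA
  -- the ζ and μ matrices
  set Z : Matrix (Fin n) (Fin n) ℂ :=
    Matrix.of (fun i j : Fin n => if x i ≤ x j then (1 : ℂ) else 0) with hZdef
  set M : Matrix (Fin n) (Fin n) ℂ := Matrix.of (fun i j : Fin n => μ i j) with hMdef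
  have hMZ : M * Z = 1 := by
    ext i j
    rw [Matrix.mul_apply, Matrix.one_apply]
    simp only [hZdef, hMdef, Matrix.of_apply, mul_ite, mul_one, mul_zero]
    by_cases hij : x i ≤ x j
    · rw [← hμ i j hij, ← Finset.sum_filter]
      symm
      apply Finset.sum_subset
      · intro v hv
        simp only [Finset.mem_filter, Finset.mem_univ, true_and] at hv ⊢
        exact hv.2
      · intro v hv hv'
        simp only [Finset.mem_filter, Finset.mem_univ, true_and, not_and] at hv hv'
        exact hμ0 i v (fun h => hv' h hv)
    · have hne : i ≠ j := fun h => hij (h ▸ le_rfl)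
      rw [if_neg hne]
      apply Finset.sum_eq_zero
      intro v _
      split_ifs with h
      · by_cases h2 : x i ≤ x v
        · exact absurd (le_trans h2 h) hij
        · exact hμ0 i v h2
      · rfl
  have hZM : Z * M = 1 := mul_eq_one_comm.mp hMZ
  have hZMentry : ∀ w u : Fin n,
      (∑ v, (if x w ≤ x v then (1 : ℂ) else 0) * μ v u) = if w = u then 1 else 0 := by
    intro w u
    have := congrFun (congrFun hZM w) u
    rw [Matrix.mul_apply] at this
    simpa [hZdef, hMdef, Matrix.one_apply] using this
  -- Ψ i v = Ψ'_{f i}(x v)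
  set Ψ : Fin n → Fin n → ℂ :=
    fun i v => ∑ u ∈ univ.filter (fun u => x v ≤ x u), f i (x u) * μ v u with hΨdef
  have hΨfull : ∀ i v, Ψ i v = ∑ u, f i (x u) * μ v u := by
    intro i v
    rw [hΨdef]
    apply Finset.sum_subset (Finset.filter_subset _ _)
    intro u _ hu
    simp only [Finset.mem_filter, Finset.mem_univ, true_and] at hu
    rw [hμ0 v u hu, mul_zero]
  -- Möbius inversion
  have hinv : ∀ i w, (∑ v, (if x w ≤ x v then (1 : ℂ) else 0) * Ψ i v) = f i (x w) := by
    intro i w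
    simp_rw [hΨfull, Finset.mul_sum]
    rw [Finset.sum_comm]
    have step : ∀ u, (∑ v, (if x w ≤ x v then (1 : ℂ) else 0) * (f i (x u) * μ v u))
        = f i (x u) * (if w = u then 1 else 0) := by
      intro u
      rw [← hZMentry w u, Finset.mul_sum]
      congr 1
      ext v
      ring
    simp only [step, mul_ite, mul_one, mul_zero, Finset.sum_ite_eq, Finset.mem_univ, if_true]
  -- the factor matrix E
  set E : Matrix (Fin n) (Fin n) ℂ :=
    Matrix.of (fun i v : Fin n => (if x i ≤ x v then (1 : ℂ) else 0) * Ψ i v) with hEdef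
  have hfact : A = E * Zᵀ := by
    ext i j
    rw [Matrix.mul_apply]
    obtain ⟨w, hw⟩ := hjoin i j
    have hAij : A i j = f i (x w) := by rw [hA, Matrix.of_apply, hw]
    rw [hAij, ← hinv i w]
    apply Finset.sum_congr rfl
    intro v _
    simp only [hEdef, hZdef, Matrix.of_apply, Matrix.transpose_apply]
    have : (x w ≤ x v) ↔ (x i ≤ x v ∧ x j ≤ x v) := by
      rw [hw]; exact sup_le_iff
    by_cases h1 : x i ≤ x v <;> by_cases h2 : x j ≤ x v <;>
      simp [this, h1, h2]
  -- `Zᵀ` is invertible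
  have hZdet : IsUnit Zᵀ.det := by
    rw [Matrix.det_transpose]
    exact IsUnit.of_mul_eq_one (a := Z.det) M.det (by rw [← Matrix.det_mul, hZM, Matrix.det_one])
  have hrankAE : A.rank = E.rank := by
    rw [hfact]
    exact Matrix.rank_mul_eq_left_of_isUnit_det Zᵀ E hZdet
  -- `E` is upper triangular with diagonal `Ψ i i`
  have hEtri : E.BlockTriangular id := by
    intro i j hji
    have hxle : ¬ x i ≤ x j := fun h => absurd (hxord i j h) (not_le.mpr hji)
    simp [hEdef, hxle]
  have hEdiag : ∀ i, E i i = Ψ i i := by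
    intro i; simp [hEdef]
  have hΨeq : ∀ i : Fin n,
      Ψ i i = ∑ v ∈ univ.filter (fun v => x i ≤ x v), f i (x v) * μ i v := fun i => rfl
  -- some diagonal entry vanishes
  obtain ⟨i₀, hi₀⟩ : ∃ i₀, Ψ i₀ i₀ = 0 := by
    have hpos : 0 < (univ.filter (fun i : Fin n =>
        (∑ v ∈ univ.filter (fun v => x i ≤ x v), f i (x v) * μ i v) = 0)).card := hk ▸ hkpos
    obtain ⟨i₀, hi₀⟩ := Finset.card_pos.mp hpos
    simp only [Finset.mem_filter, Finset.mem_univ, true_and] at hi₀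
    exact ⟨i₀, by rw [hΨeq i₀]; exact hi₀⟩
  have hdetE0 : E.det = 0 := by
    rw [Matrix.det_of_upperTriangular hEtri]
    exact Finset.prod_eq_zero (Finset.mem_univ i₀) (by rw [hEdiag i₀]; exact hi₀)
  -- rank-nullity facts
  have hrn : E.rank + Module.finrank ℂ (LinearMap.ker E.mulVecLin) = n := by
    have h := LinearMap.finrank_range_add_finrank_ker E.mulVecLin
    rwa [Module.finrank_fin_fun] at h
  -- upper bound
  have hupper : E.rank ≤ n - 1 := by
    obtain ⟨v, hvne, hv⟩ := Matrix.exists_mulVec_eq_zero_iff.mpr hdetE0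
    have hker : 0 < Module.finrank ℂ (LinearMap.ker E.mulVecLin) := by
      rw [Module.finrank_pos_iff]
      refine ⟨⟨⟨v, ?_⟩, 0, ?_⟩⟩
      · simpa [Matrix.mulVecLin_apply] using hv
      · simp [Submodule.mk_eq_zero, hvne]
    omega
  -- lower bound via the padded matrix
  set d : Fin n → ℂ := fun i => if Ψ i i = 0 then 0 else 1 with hd
  set e : Fin n → ℂ := fun i => if Ψ i i = 0 then 1 else 0 with he
  set Et : Matrix (Fin n) (Fin n) ℂ :=
    Matrix.diagonal d * E * Matrix.diagonal d + Matrix.diagonal e with hEt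
  have hEt_tri : Et.BlockTriangular id := by
    intro i j hji
    have hne : i ≠ j := fun h => absurd (h ▸ hji) (lt_irrefl _)
    rw [hEt, Matrix.add_apply, Matrix.mul_diagonal, Matrix.diagonal_mul,
      Matrix.diagonal_apply_ne e hne, hEtri hji]
    ring
  have hEt_diag : ∀ i, Et i i = if Ψ i i = 0 then 1 else Ψ i i := by
    intro i
    rw [hEt, Matrix.add_apply, Matrix.mul_diagonal, Matrix.diagonal_mul,
      Matrix.diagonal_apply_eq, hEdiag i]
    by_cases h : Ψ i i = 0 <;> simp [hd, he, h]
  have hdetEt : Et.det ≠ 0 := by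
    rw [Matrix.det_of_upperTriangular hEt_tri, Finset.prod_ne_zero_iff]
    intro i _
    rw [hEt_diag i]
    split_ifs with h
    · exact one_ne_zero
    · exact h
  have hrankEt : Et.rank = n := by
    have h := Matrix.rank_of_isUnit Et
      ((Matrix.isUnit_iff_isUnit_det Et).mpr (isUnit_iff_ne_zero.mpr hdetEt))
    simpa using h
  have hrankJ : (Matrix.diagonal e).rank = k := by
    rw [Matrix.rank_diagonal, hk, Fintype.card_subtype]
    congr 1
    ext i
    simp only [Finset.mem_filter, Finset.mem_univ, true_and, he, ← hΨeq i]
    by_cases h : Ψ i i = 0 <;> simp [h]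
  have hlow : n ≤ E.rank + k := by
    calc n = Et.rank := hrankEt.symm
    _ ≤ (Matrix.diagonal d * E * Matrix.diagonal d).rank + (Matrix.diagonal e).rank :=
        matrix_rank_add_le' _ _
    _ ≤ E.rank + k := by
        refine add_le_add ?_ (le_of_eq hrankJ)
        exact le_trans (Matrix.rank_mul_le_left _ _) (Matrix.rank_mul_le_right _ _)
  rw [← hA] at *
  constructor
  · rw [hrankAE]; omega
  · rw [hrankAE]; omega
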